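/- arXiv:1306.3334 — 2 statements merged into one kernel-verified Lean document; each statement's English description precedes it below -/
import Mathlib

section
/- Let a > 0 be real and let k, ℓ be integers with 2 ≤ k < ℓ. Assume that the function r ↦ e^{−(r+1)a}·log r is nonincreasing on [k, ∞). Then ∑_{r=k}^{ℓ−1} e^{(k−r−1)a}·log r ≤ a^{−1}·log k + a^{−1}·e^{ka}·( max(log(1/(a·k)), 0) + c₂ ), where c₂ = ∫₁^∞ e^{−r}·r^{−1} dr. -/
open MeasureTheory Set Real


-- integrability of exp(-t*a) * log t on Ioi c, c ≥ 1
lemma aux_int_log (a c : ℝ) (ha : 0 < a) (hc : 1 ≤ c) :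
    IntegrableOn (fun t : ℝ => Real.exp (-t * a) * Real.log t) (Set.Ioi c) := by
  have hmeas : Measurable (fun t : ℝ => Real.exp (-t * a) * Real.log t) := by
    measurability
  refine Integrable.mono' (g := fun t => (2/a) * Real.exp (-(a/2) * t))
    (((exp_neg_integrableOn_Ioi c (by positivity)).const_mul _)) hmeas.aestronglyMeasurable ?_
  filter_upwards [ae_restrict_mem measurableSet_Ioi] with t ht
  have ht1 : (1:ℝ) ≤ t := le_trans hc (le_of_lt ht)
  have hlog : 0 ≤ Real.log t := Real.log_nonneg ht1
  rw [Real.norm_eq_abs, abs_of_nonneg (by positivity)]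
  have h1 : Real.log t ≤ t := Real.log_le_sub_one_of_pos (by linarith) |>.trans (by linarith)
  have h2 : t ≤ (2/a) * Real.exp ((a/2) * t) := by
    have := Real.add_one_le_exp ((a/2)*t)
    have h3 : (a/2)*t ≤ Real.exp ((a/2)*t) := by nlinarith [Real.exp_pos ((a/2)*t)]
    calc t = (2/a) * ((a/2)*t) := by field_simp
    _ ≤ (2/a) * Real.exp ((a/2)*t) := by
        apply mul_le_mul_of_nonneg_left h3 (by positivity)
  calc Real.exp (-t*a) * Real.log t ≤ Real.exp (-t*a) * ((2/a) * Real.exp ((a/2)*t)) := by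
        exact mul_le_mul_of_nonneg_left (h1.trans h2) (le_of_lt (Real.exp_pos _))
  _ = (2/a) * Real.exp (-(a/2)*t) := by
      rw [mul_comm (Real.exp (-t*a)), mul_assoc, ← Real.exp_add]; ring_nf

lemma aux_int_inv (a c : ℝ) (ha : 0 < a) (hc : 1 ≤ c) :
    IntegrableOn (fun t : ℝ => Real.exp (-t * a) * t⁻¹) (Set.Ioi c) := by
  have hmeas : Measurable (fun t : ℝ => Real.exp (-t * a) * t⁻¹) := by
    measurability
  refine Integrable.mono' (g := fun t => Real.exp (-a * t))
    (exp_neg_integrableOn_Ioi c ha) hmeas.aestronglyMeasurable ?_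
  filter_upwards [ae_restrict_mem measurableSet_Ioi] with t ht
  have ht1 : (1:ℝ) ≤ t := le_trans hc (le_of_lt ht)
  rw [Real.norm_eq_abs, abs_of_nonneg (by positivity)]
  calc Real.exp (-t*a) * t⁻¹ ≤ Real.exp (-t*a) * 1 := by
        apply mul_le_mul_of_nonneg_left _ (le_of_lt (Real.exp_pos _))
        exact inv_le_one_of_one_le₀ ht1
  _ = Real.exp (-a*t) := by rw [mul_one]; ring_nf


-- tendsto: exp(-t*a) * log t → 0
lemma aux_tendsto (a : ℝ) (ha : 0 < a) :
    Filter.Tendsto (fun t : ℝ => Real.exp (-t * a) * Real.log t) Filter.atTop (nhds 0) := by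
  have h0 : Filter.Tendsto (fun t : ℝ => (2/a) * Real.exp (-(a/2) * t)) Filter.atTop (nhds 0) := by
    have := Real.tendsto_exp_atBot.comp
      (Filter.Tendsto.const_mul_atTop_of_neg (by linarith : -(a/2) < 0) Filter.tendsto_id)
    simpa using this.const_mul (2/a)
  apply squeeze_zero' (g := fun t : ℝ => (2/a) * Real.exp (-(a/2) * t)) _ _ h0
  · filter_upwards [Filter.eventually_ge_atTop (1:ℝ)] with t ht
    exact mul_nonneg (Real.exp_pos _).le (Real.log_nonneg ht)
  · filter_upwards [Filter.eventually_ge_atTop (1:ℝ)] with t ht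
    have h1 : Real.log t ≤ t := Real.log_le_sub_one_of_pos (by linarith) |>.trans (by linarith)
    have h3 : (a/2)*t ≤ Real.exp ((a/2)*t) := by nlinarith [Real.add_one_le_exp ((a/2)*t)]
    have h2 : t ≤ (2/a) * Real.exp ((a/2)*t) := by
      calc t = (2/a) * ((a/2)*t) := by field_simp
      _ ≤ (2/a) * Real.exp ((a/2)*t) := mul_le_mul_of_nonneg_left h3 (by positivity)
    calc Real.exp (-t*a) * Real.log t ≤ Real.exp (-t*a) * ((2/a) * Real.exp ((a/2)*t)) :=
          mul_le_mul_of_nonneg_left (h1.trans h2) (le_of_lt (Real.exp_pos _))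
    _ = (2/a) * Real.exp (-(a/2)*t) := by
        rw [mul_comm (Real.exp (-t*a)), mul_assoc, ← Real.exp_add]; ring_nf

-- FTC identity
lemma aux_ftc (a c : ℝ) (ha : 0 < a) (hc : 1 ≤ c) :
    ∫ t in Set.Ioi c, Real.exp (-t * a) * Real.log t
      = a⁻¹ * Real.exp (-c * a) * Real.log c
        + a⁻¹ * ∫ t in Set.Ioi c, Real.exp (-t * a) * t⁻¹ := by
  set F : ℝ → ℝ := fun t => -(a⁻¹) * (Real.exp (-t * a) * Real.log t) with hF
  have hderiv : ∀ t ∈ Set.Ioi (0:ℝ), HasDerivAt F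
      (Real.exp (-t * a) * Real.log t - a⁻¹ * (Real.exp (-t * a) * t⁻¹)) t := by
    intro t ht
    have h1 : HasDerivAt (fun t : ℝ => Real.exp (-t * a)) (-a * Real.exp (-t * a)) t := by
      have := (Real.hasDerivAt_exp (-t * a)).comp t
        (((hasDerivAt_id t).neg.mul_const a))
      simpa [mul_comm, Function.comp_def] using this
    have h2 : HasDerivAt Real.log t⁻¹ t := Real.hasDerivAt_log (ne_of_gt ht)
    have h3 := (h1.mul h2).const_mul (-(a⁻¹))
    refine h3.congr_deriv ?_
    linear_combination (Real.exp (-t * a) * Real.log t) * inv_mul_cancel₀ ha.ne'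
  have h'int : IntegrableOn
      (fun t => Real.exp (-t * a) * Real.log t - a⁻¹ * (Real.exp (-t * a) * t⁻¹))
      (Set.Ioi c) :=
    (aux_int_log a c ha hc).sub ((aux_int_inv a c ha hc).const_mul _)
  have htend : Filter.Tendsto F Filter.atTop (nhds 0) := by
    have h := Filter.Tendsto.const_mul (-(a⁻¹)) (aux_tendsto a ha)
    rw [show (0:ℝ) = -(a⁻¹) * 0 by ring]
    exact h
  have hcont : ContinuousWithinAt F (Set.Ici c) c :=
    (hderiv c (Set.mem_Ioi.mpr (by linarith))).continuousAt.continuousWithinAt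
  have key := integral_Ioi_of_hasDerivAt_of_tendsto hcont
    (fun t ht => hderiv t (by simp only [Set.mem_Ioi] at *; linarith)) h'int htend
  have hsplit : ∫ t in Set.Ioi c,
      (Real.exp (-t * a) * Real.log t - a⁻¹ * (Real.exp (-t * a) * t⁻¹))
      = (∫ t in Set.Ioi c, Real.exp (-t * a) * Real.log t)
        - a⁻¹ * ∫ t in Set.Ioi c, Real.exp (-t * a) * t⁻¹ := by
    rw [integral_sub (aux_int_log a c ha hc) ((aux_int_inv a c ha hc).const_mul _),
      integral_const_mul]
  rw [hsplit] at key
  have hFc : F c = -(a⁻¹) * (Real.exp (-c * a) * Real.log c) := rfl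
  rw [hFc] at key
  linarith [key]

-- substitution
lemma aux_subst (a c : ℝ) (ha : 0 < a) :
    ∫ t in Set.Ioi c, Real.exp (-t * a) * t⁻¹
      = ∫ u in Set.Ioi (a * c), Real.exp (-u) * u⁻¹ := by
  have h := integral_comp_mul_left_Ioi (fun u : ℝ => Real.exp (-u) * u⁻¹) c ha
  have h2 : ∀ x : ℝ, Real.exp (-(a * x)) * (a * x)⁻¹ = a⁻¹ * (Real.exp (-x * a) * x⁻¹) := by
    intro x; rw [mul_inv]; ring_nf
  simp only [h2] at h
  rw [MeasureTheory.integral_const_mul] at h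
  have := congrArg (fun z => a * z) h
  simp only [smul_eq_mul, ← mul_assoc, mul_inv_cancel₀ ha.ne', one_mul] at this
  exact this

-- integrability of exp(-u) u⁻¹ on Ioi c for c > 0
lemma aux_int_inv1 (c : ℝ) (hc : 0 < c) :
    IntegrableOn (fun u : ℝ => Real.exp (-u) * u⁻¹) (Set.Ioi c) := by
  rcases le_or_gt 1 c with h | h
  · have := aux_int_inv 1 c one_pos h
    simpa using this
  · have h1 : IntegrableOn (fun u : ℝ => Real.exp (-u) * u⁻¹) (Set.Ioi 1) := by
      simpa using aux_int_inv 1 1 one_pos le_rfl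
    have h2 : IntegrableOn (fun u : ℝ => Real.exp (-u) * u⁻¹) (Set.Ioc c 1) := by
      refine (ContinuousOn.integrableOn_compact (isCompact_Icc (a := c) (b := 1)) ?_).mono_set Ioc_subset_Icc_self
      exact (Real.continuous_exp.comp continuous_neg).continuousOn.mul
        (continuousOn_inv₀.mono (fun x hx => ne_of_gt (lt_of_lt_of_le hc hx.1)))
    have := h2.union h1
    rwa [Set.Ioc_union_Ioi_eq_Ioi h.le] at this

-- tail bound
lemma aux_tail (a c : ℝ) (ha : 0 < a) (hc : 0 < c) :
    ∫ u in Set.Ioi (a * c), Real.exp (-u) * u⁻¹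
      ≤ max (Real.log (1 / (a * c))) 0 + ∫ u in Set.Ioi (1:ℝ), Real.exp (-u) * u⁻¹ := by
  have hac : 0 < a * c := by positivity
  have hnn : ∀ u ∈ Set.Ioi (0:ℝ), 0 ≤ Real.exp (-u) * u⁻¹ := fun u hu => by
    have : (0:ℝ) < u := hu
    positivity
  rcases le_or_gt 1 (a * c) with h | h
  · have hmono : ∫ u in Set.Ioi (a * c), Real.exp (-u) * u⁻¹
        ≤ ∫ u in Set.Ioi (1:ℝ), Real.exp (-u) * u⁻¹ := by
      apply setIntegral_mono_set (aux_int_inv1 1 one_pos)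
      · filter_upwards [ae_restrict_mem measurableSet_Ioi] with u hu
        exact hnn u (show (0:ℝ) < u from lt_trans one_pos hu)
      · exact Filter.Eventually.of_forall fun u hu => lt_of_le_of_lt h hu
    have : (0:ℝ) ≤ max (Real.log (1 / (a * c))) 0 := le_max_right _ _
    linarith
  · have hsplit : ∫ u in Set.Ioi (a * c), Real.exp (-u) * u⁻¹
        = (∫ u in Set.Ioc (a * c) 1, Real.exp (-u) * u⁻¹)
          + ∫ u in Set.Ioi (1:ℝ), Real.exp (-u) * u⁻¹ := by
      rw [← setIntegral_union]
      · rw [Set.Ioc_union_Ioi_eq_Ioi h.le]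
      · exact Set.Ioc_disjoint_Ioi le_rfl
      · exact measurableSet_Ioi
      · exact ((aux_int_inv1 _ hac).mono_set (Set.Ioc_subset_Ioi_self))
      · exact aux_int_inv1 1 one_pos
    have hmid : (∫ u in Set.Ioc (a * c) 1, Real.exp (-u) * u⁻¹)
        ≤ ∫ u in Set.Ioc (a * c) 1, u⁻¹ := by
      apply setIntegral_mono_on
      · exact (aux_int_inv1 _ hac).mono_set (Set.Ioc_subset_Ioi_self)
      · refine (ContinuousOn.integrableOn_compact (isCompact_Icc (a := a*c) (b := 1)) ?_).mono_set Ioc_subset_Icc_self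
        exact continuousOn_inv₀.mono (fun x hx => ne_of_gt (lt_of_lt_of_le hac hx.1))
      · exact measurableSet_Ioc
      · intro u hu
        have hu0 : 0 < u := lt_trans hac hu.1
        calc Real.exp (-u) * u⁻¹ ≤ 1 * u⁻¹ := by
              apply mul_le_mul_of_nonneg_right _ (by positivity)
              exact Real.exp_le_one_iff.mpr (by linarith [hu0])
        _ = u⁻¹ := one_mul _
    have hlogint : ∫ u in Set.Ioc (a * c) 1, u⁻¹ = Real.log (1 / (a * c)) := by
      rw [← intervalIntegral.integral_of_le h.le, integral_inv_of_pos hac one_pos]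
    have hmax : Real.log (1 / (a * c)) ≤ max (Real.log (1 / (a * c))) 0 := le_max_left _ _
    rw [hsplit]
    linarith [hmid, hlogint ▸ hmid]


lemma aux_sum (f : ℝ → ℝ) (k n : ℕ)
    (hf : AntitoneOn f (Set.Icc (k:ℝ) ((k:ℝ) + n))) :
    ∑ r ∈ Finset.Icc k (k + n), f r ≤ f k + ∫ x in (k:ℝ)..((k:ℝ) + n), f x := by
  have h := AntitoneOn.sum_le_integral (x₀ := (k:ℝ)) (a := n) hf
  have hs : ∑ r ∈ Finset.Icc k (k + n), f r
      = f k + ∑ i ∈ Finset.range n, f ((k:ℝ) + ((i:ℝ) + 1)) := by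
    rw [← Finset.Ico_add_one_right_eq_Icc, Finset.sum_Ico_eq_sum_range]
    have : k + n + 1 - k = n + 1 := by omega
    rw [this]
    rw [Finset.sum_range_succ']
    simp only [Nat.add_zero, Nat.cast_add]
    rw [add_comm]
    congr 1
    apply Finset.sum_congr rfl
    intro i _
    push_cast
    ring_nf
  rw [hs]
  have h' : ∑ i ∈ Finset.range n, f ((k:ℝ) + ((i:ℝ) + 1))
      = ∑ i ∈ Finset.range n, f ((k:ℝ) + ((i+1 : ℕ) : ℝ)) := by
    apply Finset.sum_congr rfl; intro i _; push_cast; ring_nf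
  rw [h']
  linarith [h]

/-- Integral-comparison bound for the geometrically weighted logarithmic sum: for
`a > 0` and integers `2 ≤ k < ℓ`, if `r ↦ e^{−(r+1)a} log r` is nonincreasing on
`[k, ∞)`, then `∑_{r=k}^{ℓ−1} e^{(k−r−1)a} log r
  ≤ a^{−1} log k + a^{−1} e^{ka} (log⁺(1/(ak)) + ∫₁^∞ e^{−r} r^{−1} dr)`. -/
theorem weighted_log_sum_bound
    (a : ℝ) (ha : 0 < a) (k ℓ : ℕ) (hk : 2 ≤ k) (hkl : k < ℓ)
    (hmono : AntitoneOn (fun r : ℝ => Real.exp (-(r + 1) * a) * Real.log r)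
      (Set.Ici (k : ℝ))) :
    ∑ r ∈ Finset.Icc k (ℓ - 1), Real.exp (((k : ℝ) - (r : ℝ) - 1) * a) * Real.log r
      ≤ a⁻¹ * Real.log k + a⁻¹ * Real.exp ((k : ℝ) * a)
          * (max (Real.log (1 / (a * (k : ℝ)))) 0
              + ∫ r in Set.Ioi (1 : ℝ), Real.exp (-r) * r⁻¹) := by
  set f : ℝ → ℝ := fun r => Real.exp (-(r + 1) * a) * Real.log r with hf
  set K : ℝ := (k : ℝ) with hK
  have hK2 : (2:ℝ) ≤ K := by rw [hK]; exact_mod_cast hk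
  have hK1 : (1:ℝ) ≤ K := by linarith
  have hL : 0 ≤ Real.log K := Real.log_nonneg hK1
  set n : ℕ := ℓ - 1 - k with hn
  have hln : ℓ - 1 = k + n := by omega
  -- Step 1: factor out exp(K*a)
  have hfactor : ∑ r ∈ Finset.Icc k (ℓ - 1),
      Real.exp ((K - (r : ℝ) - 1) * a) * Real.log r
      = Real.exp (K * a) * ∑ r ∈ Finset.Icc k (ℓ - 1), f r := by
    rw [Finset.mul_sum]
    apply Finset.sum_congr rfl
    intro r _
    simp only [hf]
    rw [← mul_assoc, ← Real.exp_add, show K * a + -((r:ℝ) + 1) * a = (K - (r:ℝ) - 1) * a by ring]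
  -- Step 2: sum ≤ f K + integral
  have hA : ∑ r ∈ Finset.Icc k (ℓ - 1), f r ≤ f K + ∫ x in K..(K + n), f x := by
    rw [hln]
    exact aux_sum f k n (hmono.mono (fun x hx => hx.1))
  -- integrability of f on Ioi K
  have hfeq : ∀ t : ℝ, f t = Real.exp (-a) * (Real.exp (-t * a) * Real.log t) := by
    intro t
    simp only [hf]
    rw [← mul_assoc, ← Real.exp_add, show -a + -t * a = -(t + 1) * a by ring]
  have hIf : IntegrableOn f (Set.Ioi K) := by
    have h := (aux_int_log a K ha hK1).const_mul (Real.exp (-a))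
    have heq : (fun t => Real.exp (-a) * (Real.exp (-t * a) * Real.log t)) = f :=
      (funext hfeq).symm
    rwa [heq] at h
  -- Step 3: interval integral ≤ Ioi integral
  have hB : ∫ x in K..(K + n), f x ≤ ∫ x in Set.Ioi K, f x := by
    rw [intervalIntegral.integral_of_le (le_add_of_nonneg_right (Nat.cast_nonneg n) : K ≤ K + n)]
    apply setIntegral_mono_set hIf
    · filter_upwards [ae_restrict_mem measurableSet_Ioi] with t ht
      have ht1 : (1:ℝ) ≤ t := le_trans hK1 (le_of_lt ht)
      simp only [hf]
      exact mul_nonneg (Real.exp_pos _).le (Real.log_nonneg ht1)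
    · exact HasSubset.Subset.eventuallyLE Set.Ioc_subset_Ioi_self
  -- Step 4: compute Ioi integral
  set J : ℝ := ∫ t in Set.Ioi K, Real.exp (-t * a) * t⁻¹ with hJ
  have hC : ∫ x in Set.Ioi K, f x
      = Real.exp (-a) * (a⁻¹ * Real.exp (-K * a) * Real.log K + a⁻¹ * J) := by
    rw [show (fun x => f x) = fun t => Real.exp (-a) * (Real.exp (-t * a) * Real.log t) from
      funext hfeq, MeasureTheory.integral_const_mul, aux_ftc a K ha hK1]
  set M : ℝ := max (Real.log (1 / (a * K))) 0 + ∫ u in Set.Ioi (1:ℝ), Real.exp (-u) * u⁻¹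
    with hM
  have hJM : J ≤ M := by
    rw [hJ, aux_subst a K ha]
    exact aux_tail a K ha (by linarith)
  have hJ0 : 0 ≤ J := by
    rw [hJ]
    apply setIntegral_nonneg measurableSet_Ioi
    intro t ht
    have : (0:ℝ) < t := by have := ht; simp only [Set.mem_Ioi] at this; linarith
    positivity
  -- final algebra
  set q : ℝ := Real.exp (-a) with hq
  set E : ℝ := Real.exp (K * a) with hE
  have hq1 : q ≤ 1 := Real.exp_le_one_iff.mpr (by linarith)
  have hq0 : 0 < q := Real.exp_pos _
  have hE0 : 0 < E := Real.exp_pos _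
  have hEK : E * Real.exp (-K * a) = 1 := by
    rw [hE, ← Real.exp_add, show K * a + -K * a = 0 by ring, Real.exp_zero]
  have hfK : f K = Real.exp (-(K + 1) * a) * Real.log K := by simp only [hf]
  have hfK2 : E * f K = q * Real.log K := by
    rw [hfK, hE, hq, ← mul_assoc, ← Real.exp_add, show K * a + -(K + 1) * a = -a by ring]
  have hqa : q * (a + 1) ≤ 1 := by
    have h := Real.add_one_le_exp a
    calc q * (a + 1) ≤ q * Real.exp a := mul_le_mul_of_nonneg_left h hq0.le
    _ = 1 := by rw [hq, ← Real.exp_add, show -a + a = 0 by ring, Real.exp_zero]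
  have hia : 0 < a⁻¹ := inv_pos.mpr ha
  have hq2 : q + q * a⁻¹ ≤ a⁻¹ := by
    have := mul_le_mul_of_nonneg_right hqa hia.le
    have haa : a * a⁻¹ = 1 := mul_inv_cancel₀ ha.ne'
    nlinarith
  have hM0 : 0 ≤ M := by
    rw [hM]
    have : (0:ℝ) ≤ ∫ u in Set.Ioi (1:ℝ), Real.exp (-u) * u⁻¹ := by
      apply setIntegral_nonneg measurableSet_Ioi
      intro t ht
      have : (0:ℝ) < t := by simp only [Set.mem_Ioi] at ht; linarith
      positivity
    have := le_max_right (Real.log (1 / (a * K))) 0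
    linarith
  calc ∑ r ∈ Finset.Icc k (ℓ - 1), Real.exp ((K - (r : ℝ) - 1) * a) * Real.log r
      = E * ∑ r ∈ Finset.Icc k (ℓ - 1), f r := hfactor
  _ ≤ E * (f K + (q * (a⁻¹ * Real.exp (-K * a) * Real.log K + a⁻¹ * J))) := by
      apply mul_le_mul_of_nonneg_left _ hE0.le
      calc ∑ r ∈ Finset.Icc k (ℓ - 1), f r ≤ f K + ∫ x in K..(K + n), f x := hA
      _ ≤ f K + ∫ x in Set.Ioi K, f x := by linarith
      _ = f K + q * (a⁻¹ * Real.exp (-K * a) * Real.log K + a⁻¹ * J) := by rw [hC]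
  _ = q * Real.log K + q * a⁻¹ * (E * Real.exp (-K * a)) * Real.log K
        + q * a⁻¹ * E * J := by
      rw [mul_add, hfK2]; ring
  _ = (q + q * a⁻¹) * Real.log K + q * a⁻¹ * E * J := by rw [hEK]; ring
  _ ≤ a⁻¹ * Real.log K + a⁻¹ * E * M := by
      have h1 : (q + q * a⁻¹) * Real.log K ≤ a⁻¹ * Real.log K :=
        mul_le_mul_of_nonneg_right hq2 hL
      have h2 : q * a⁻¹ * E * J ≤ a⁻¹ * E * M := by
        calc q * a⁻¹ * E * J ≤ 1 * a⁻¹ * E * J := by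
              apply mul_le_mul_of_nonneg_right _ hJ0
              apply mul_le_mul_of_nonneg_right _ hE0.le
              exact mul_le_mul_of_nonneg_right hq1 hia.le
        _ = a⁻¹ * E * J := by ring
        _ ≤ a⁻¹ * E * M := mul_le_mul_of_nonneg_left hJM (by positivity)
      linarith
end

section
/- Let q ∈ (1,2), s > 0, η ∈ (0, (q−1)/2), and let γ satisfy 0 < γ < s·(1 − 2η/(q−1)). Then there exists k₀ (depending only on q, s, η, γ) such that for every integer k ≥ k₀ the following holds: set β = (q−1)/(2s(k−1)) and define the sequence (m_ℓ)_{ℓ ≥ k} by m_k = k^{s(k−1)} and m_{ℓ+1} = m_ℓ^{1+β}·ℓ^{−η} for ℓ ≥ k; then for every integer ℓ ≥ k, log m_ℓ ≥ γ·(β+1)^{ℓ−k}·k·log k. -/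
set_option maxHeartbeats 1000000

/-- Doubly exponential growth of the moment thresholds: for `q ∈ (1,2)`, `s > 0`,
`η ∈ (0,(q−1)/2)` and `0 < γ < s(1 − 2η/(q−1))`, there is `k₀` such that for all
`k ≥ k₀`, the sequence defined by `m_k = k^{s(k−1)}` and
`m_{ℓ+1} = m_ℓ^{1+β} ℓ^{−η}` (with `β = (q−1)/(2s(k−1))`) satisfies
`log m_ℓ ≥ γ (β+1)^{ℓ−k} k log k` for all `ℓ ≥ k`. -/
theorem moment_threshold_growth
    (q s η γ : ℝ) (hq1 : 1 < q) (hq2 : q < 2) (hs : 0 < s)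
    (hη : η ∈ Set.Ioo (0 : ℝ) ((q - 1) / 2))
    (hγ1 : 0 < γ) (hγ2 : γ < s * (1 - 2 * η / (q - 1))) :
    ∃ k₀ : ℕ, ∀ k : ℕ, k₀ ≤ k →
      ∀ m : ℕ → ℝ,
        m k = (k : ℝ) ^ (s * ((k : ℝ) - 1)) →
        (∀ ℓ : ℕ, k ≤ ℓ →
          m (ℓ + 1) = m ℓ ^ (1 + (q - 1) / (2 * s * ((k : ℝ) - 1))) * (ℓ : ℝ) ^ (-η)) →
        ∀ ℓ : ℕ, k ≤ ℓ →
          γ * ((q - 1) / (2 * s * ((k : ℝ) - 1)) + 1) ^ (ℓ - k) * (k : ℝ) * Real.log k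
            ≤ Real.log (m ℓ) := by
  obtain ⟨hη0, hη2⟩ := hη
  have hq1' : (0:ℝ) < q - 1 := by linarith
  -- polynomial versions of the constants
  have hPG : 0 < s * (q - 1 - 2*η) - γ * (q - 1) := by
    have h := mul_lt_mul_of_pos_right hγ2 hq1'
    have he : s * (1 - 2 * η / (q - 1)) * (q - 1) = s * (q - 1 - 2*η) := by
      field_simp
    linarith [he ▸ h]
  -- eventual conditions on k
  have h2 : ∀ᶠ k : ℕ in Filter.atTop,
      s * (q - 1 - 2*η) ≤ (s * (q - 1 - 2*η) - γ * (q - 1))/2 * (k:ℝ) := by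
    have ht : Filter.Tendsto
        (fun k : ℕ => (s * (q - 1 - 2*η) - γ * (q - 1))/2 * (k:ℝ))
        Filter.atTop Filter.atTop :=
      (tendsto_natCast_atTop_atTop (R := ℝ)).const_mul_atTop (by linarith)
    exact ht.eventually_ge_atTop _
  have h3 : ∀ᶠ k : ℕ in Filter.atTop,
      4*s^2*η ≤ (s * (q - 1 - 2*η) - γ * (q - 1))*(q-1)/2 * Real.log (k:ℝ) := by
    have hlog : Filter.Tendsto (fun k : ℕ => Real.log (k:ℝ)) Filter.atTop Filter.atTop :=
      Real.tendsto_log_atTop.comp (tendsto_natCast_atTop_atTop (R := ℝ))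
    have ht : Filter.Tendsto
        (fun k : ℕ => (s * (q - 1 - 2*η) - γ * (q - 1))*(q-1)/2 * Real.log (k:ℝ))
        Filter.atTop Filter.atTop :=
      hlog.const_mul_atTop (by positivity)
    exact ht.eventually_ge_atTop _
  obtain ⟨k₀, hk₀⟩ := Filter.eventually_atTop.mp
    ((Filter.eventually_ge_atTop 3).and (h2.and h3))
  refine ⟨k₀, fun k hk m hmk hrec => ?_⟩
  obtain ⟨hk3, hS, hC⟩ := hk₀ k hk
  have hkR3 : (3:ℝ) ≤ (k:ℝ) := by exact_mod_cast hk3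
  have hkR0 : (0:ℝ) < (k:ℝ) := by linarith
  have hk1 : (0:ℝ) < (k:ℝ) - 1 := by linarith
  set b : ℝ := (q - 1) / (2 * s * ((k:ℝ) - 1)) with hbdef
  have hb0 : 0 < b := div_pos hq1' (by positivity)
  have hL0 : 0 ≤ Real.log (k:ℝ) := Real.log_nonneg (by linarith)
  -- positivity of m
  have hpos : ∀ ℓ : ℕ, k ≤ ℓ → 0 < m ℓ := by
    intro ℓ hℓ
    induction ℓ, hℓ using Nat.le_induction with
    | base => rw [hmk]; exact Real.rpow_pos_of_pos hkR0 _
    | succ n hn ih =>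
        rw [hrec n hn]
        have hn0 : (0:ℝ) < (n:ℝ) := by
          have : (k:ℝ) ≤ (n:ℝ) := by exact_mod_cast hn
          linarith
        exact mul_pos (Real.rpow_pos_of_pos ih _) (Real.rpow_pos_of_pos hn0 _)
  -- key invariant
  have key : ∀ ℓ : ℕ, k ≤ ℓ →
      γ * (b + 1) ^ (ℓ - k) * (k:ℝ) * Real.log (k:ℝ)
        + (η/b) * Real.log (ℓ:ℝ) + η/(b^2 * (k:ℝ))
        ≤ Real.log (m ℓ) := by
    intro ℓ hℓ
    induction ℓ, hℓ using Nat.le_induction with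
    | base =>
        rw [hmk, Real.log_rpow hkR0, Nat.sub_self, pow_zero]
        have hb1 : η/b = η * (2 * s * ((k:ℝ) - 1))/(q - 1) := by
          rw [hbdef]; field_simp
        have hb2 : η/(b^2 * (k:ℝ)) = η * (2 * s * ((k:ℝ) - 1))^2/((q - 1)^2 * (k:ℝ)) := by
          rw [hbdef]; rw [div_pow]; field_simp
        rw [hb1, hb2, ← sub_nonneg]
        have hid : s * ((k:ℝ) - 1) * Real.log (k:ℝ) -
            (γ * 1 * (k:ℝ) * Real.log (k:ℝ)
              + η * (2 * s * ((k:ℝ) - 1))/(q - 1) * Real.log (k:ℝ)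
              + η * (2 * s * ((k:ℝ) - 1))^2/((q - 1)^2 * (k:ℝ)))
            = ((k:ℝ) * Real.log (k:ℝ) * (q-1) *
                ((s * (q - 1 - 2*η) - γ * (q - 1)) * (k:ℝ) - s * (q - 1 - 2*η))
               - 4*s^2*η*((k:ℝ)-1)^2) / ((q-1)^2 * (k:ℝ)) := by
          field_simp
          ring
        rw [hid]
        apply div_nonneg _ (by positivity)
        rw [sub_nonneg]
        have hstep1 : (s * (q - 1 - 2*η) - γ * (q - 1))/2 * (k:ℝ)
            ≤ (s * (q - 1 - 2*η) - γ * (q - 1)) * (k:ℝ) - s * (q - 1 - 2*η) := by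
          linarith
        have hsq : ((k:ℝ)-1)^2 ≤ (k:ℝ)^2 := by nlinarith
        calc 4*s^2*η*((k:ℝ)-1)^2
            ≤ (k:ℝ)^2 * (4*s^2*η) := by
              rw [mul_comm ((k:ℝ)^2) _]
              exact mul_le_mul_of_nonneg_left hsq (by positivity)
          _ ≤ (k:ℝ)^2 * ((s * (q - 1 - 2*η) - γ * (q - 1))*(q-1)/2 * Real.log (k:ℝ)) :=
              mul_le_mul_of_nonneg_left hC (sq_nonneg _)
          _ = (k:ℝ) * Real.log (k:ℝ) * (q-1) *
                ((s * (q - 1 - 2*η) - γ * (q - 1))/2 * (k:ℝ)) := by ring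
          _ ≤ (k:ℝ) * Real.log (k:ℝ) * (q-1) *
                ((s * (q - 1 - 2*η) - γ * (q - 1)) * (k:ℝ) - s * (q - 1 - 2*η)) := by
              exact mul_le_mul_of_nonneg_left hstep1 (by positivity)
    | succ n hn ih =>
        have hnR : (k:ℝ) ≤ (n:ℝ) := by exact_mod_cast hn
        have hn0 : (0:ℝ) < (n:ℝ) := by linarith
        have hmn : 0 < m n := hpos n hn
        rw [hrec n hn, Real.log_mul (by positivity) (by positivity),
          Real.log_rpow hmn, Real.log_rpow hn0]
        have hpow : (n + 1 - k) = (n - k) + 1 := by omega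
        have hlogstep : Real.log ((n:ℝ) + 1) - Real.log (n:ℝ) ≤ 1/(k:ℝ) := by
          have h0 : (0:ℝ) < ((n:ℝ) + 1)/(n:ℝ) := by positivity
          have h := Real.log_le_sub_one_of_pos h0
          rw [Real.log_div (by positivity) (by positivity)] at h
          have h1 : ((n:ℝ) + 1)/(n:ℝ) - 1 = 1/(n:ℝ) := by field_simp; ring
          have h2 : 1/(n:ℝ) ≤ 1/(k:ℝ) := one_div_le_one_div_of_le hkR0 hnR
          linarith
        have hIH' : (1 + b) * (γ * (b + 1) ^ (n - k) * (k:ℝ) * Real.log (k:ℝ)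
              + (η/b) * Real.log (n:ℝ) + η/(b^2 * (k:ℝ)))
            ≤ (1 + b) * Real.log (m n) :=
          mul_le_mul_of_nonneg_left ih (by linarith)
        have hcast : ((n + 1 : ℕ) : ℝ) = (n:ℝ) + 1 := by push_cast; ring
        rw [hpow, hcast]
        have hexp : (1 + b) * (γ * (b + 1) ^ (n - k) * (k:ℝ) * Real.log (k:ℝ)
              + (η/b) * Real.log (n:ℝ) + η/(b^2 * (k:ℝ)))
            = γ * (b + 1) ^ ((n - k) + 1) * (k:ℝ) * Real.log (k:ℝ)
              + (η/b) * Real.log (n:ℝ) + η/(b^2 * (k:ℝ))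
              + η * Real.log (n:ℝ) + η/(b * (k:ℝ)) := by
          rw [pow_succ]
          field_simp
          ring
        have hslack : (η/b) * Real.log ((n:ℝ) + 1) - (η/b) * Real.log (n:ℝ)
            ≤ η/(b * (k:ℝ)) := by
          have hηb : 0 ≤ η/b := by positivity
          have h := mul_le_mul_of_nonneg_left hlogstep hηb
          have h3 : (η/b) * (1/(k:ℝ)) = η/(b * (k:ℝ)) := by
            field_simp
          nlinarith [h]
        linarith [hIH', hexp, hslack]
  -- conclude
  intro ℓ hℓ
  have h := key ℓ hℓ
  have hℓR : (k:ℝ) ≤ (ℓ:ℝ) := by exact_mod_cast hℓ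
  have hlogℓ : 0 ≤ Real.log (ℓ:ℝ) := Real.log_nonneg (by linarith)
  have ht1 : 0 ≤ (η/b) * Real.log (ℓ:ℝ) := by positivity
  have ht2 : 0 ≤ η/(b^2 * (k:ℝ)) := by positivity
  linarith
end
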